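/- Let α ∈ [0, 1] and ε ∈ [0, 1], and set Δ = ε²/16 − α(1 − α)·ε·(1 − 3ε/4) + (1 − ε)/4. Let v ∈ ℂ⁴ be the unit vector v = (√(1 − α), 0, 0, √α), and let M be the 4×4 complex matrix M = (1 − ε)·v v† + (ε/2)·diag(1 − α, 1 − α, α, α). Then M is Hermitian and its characteristic polynomial equals (X − α·ε/2)·(X − (1 − α)·ε/2)·(X − (1/2 − ε/4 − √Δ))·(X − (1/2 − ε/4 + √Δ)). -/

import Mathlib

open Polynomial

private lemma of_mat_apply4 (A : Matrix (Fin 4) (Fin 4) ℂ) (i j : Fin 4) : Matrix.of A i j = A i j := rfl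

private lemma det4_sparse (p q r s t q' : ℂ) :
    (Matrix.of !![p,0,0,q; 0,r,0,0; 0,0,s,0; q',0,0,t]).det = r*s*(p*t - q*q') := by
  simp [of_mat_apply4, (show Fin.succAbove (3 : Fin 4) (2 : Fin 3) = 2 from rfl), Matrix.det_succ_row_zero, Fin.sum_univ_succ, Fin.castSucc, Fin.castAdd, Fin.castLE,
    Matrix.vecHead, Matrix.vecTail]
  ring

private lemma charpoly_eval4 (z p q r s t q' : ℂ) :
    Polynomial.eval z (Matrix.of !![p,0,0,q; 0,r,0,0; 0,0,s,0; q',0,0,t]).charpoly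
    = (z-r)*(z-s)*((z-p)*(z-t) - q*q') := by
  rw [Matrix.charpoly]
  have hev : ∀ pp : ℂ[X], Polynomial.eval z pp = Polynomial.evalRingHom z pp := fun _ => rfl
  rw [hev, RingHom.map_det, RingHom.mapMatrix_apply]
  have hmap : ((Matrix.of !![p,0,0,q; 0,r,0,0; 0,0,s,0; q',0,0,t]).charmatrix).map
        (Polynomial.evalRingHom z)
      = Matrix.of !![z-p,0,0,-q; 0,z-r,0,0; 0,0,z-s,0; -q',0,0,z-t] := by
    ext i j
    fin_cases i <;> fin_cases j <;>
      simp [of_mat_apply4, Matrix.charmatrix_apply_eq, Matrix.charmatrix_apply_ne,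
        Matrix.vecHead, Matrix.vecTail]
  rw [hmap, det4_sparse]
  ring

/-- The depolarizing-channel output state on `ℂ⁴` is Hermitian with
characteristic polynomial having roots `αε/2`, `(1−α)ε/2`, `1/2 − ε/4 ∓ √Δ`. -/
theorem depolarizing_output_charpoly (α ε : ℝ)
    (hα : α ∈ Set.Icc (0 : ℝ) 1) (hε : ε ∈ Set.Icc (0 : ℝ) 1)
    (Δ : ℝ) (hΔ : Δ = ε ^ 2 / 16 - α * (1 - α) * ε * (1 - 3 * ε / 4) + (1 - ε) / 4)
    (v : Fin 4 → ℂ)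
    (hv : v = ![(Real.sqrt (1 - α) : ℂ), 0, 0, (Real.sqrt α : ℂ)])
    (M : Matrix (Fin 4) (Fin 4) ℂ)
    (hM : M = ((1 - ε : ℝ) : ℂ) • Matrix.vecMulVec v (star v)
        + ((ε / 2 : ℝ) : ℂ) • Matrix.diagonal ![((1 - α : ℝ) : ℂ), ((1 - α : ℝ) : ℂ),
            ((α : ℝ) : ℂ), ((α : ℝ) : ℂ)]) :
    M.IsHermitian ∧
    M.charpoly = (X - C ((α * ε / 2 : ℝ) : ℂ)) *
                 (X - C (((1 - α) * ε / 2 : ℝ) : ℂ)) *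
                 (X - C ((1 / 2 - ε / 4 - Real.sqrt Δ : ℝ) : ℂ)) *
                 (X - C ((1 / 2 - ε / 4 + Real.sqrt Δ : ℝ) : ℂ)) := by
  obtain ⟨hα0, hα1⟩ := hα
  obtain ⟨hε0, hε1⟩ := hε
  have hΔ0 : 0 ≤ Δ := by
    nlinarith [sq_nonneg ((1-2*α)*(1-ε/2)), sq_nonneg (1-ε),
      mul_nonneg hα0 (by linarith : (0:ℝ) ≤ 1-α)]
  set a := Real.sqrt (1-α) with ha_def
  set b := Real.sqrt α with hb_def
  set d := Real.sqrt Δ with hd_def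
  have haR : a * a = 1 - α := by
    have := Real.sq_sqrt (by linarith : (0:ℝ) ≤ 1-α)
    rw [← ha_def] at this; nlinarith [this]
  have hbR : b * b = α := by
    have := Real.sq_sqrt hα0
    rw [← hb_def] at this; nlinarith [this]
  have hdR : d * d = Δ := by
    have := Real.sq_sqrt hΔ0
    rw [← hd_def] at this; nlinarith [this]
  have haC : (a:ℂ) * (a:ℂ) = 1 - (α:ℂ) := by
    have h := congrArg (Complex.ofReal) haR
    push_cast at h; linear_combination h
  have hbC : (b:ℂ) * (b:ℂ) = (α:ℂ) := by
    have h := congrArg (Complex.ofReal) hbR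
    push_cast at h; linear_combination h
  have hdC : (d:ℂ) * (d:ℂ) = ((ε:ℂ) ^ 2 / 16 - (α:ℂ) * (1 - (α:ℂ)) * (ε:ℂ) * (1 - 3 * (ε:ℂ) / 4)
      + (1 - (ε:ℂ)) / 4) := by
    rw [hΔ] at hdR
    have h := congrArg (Complex.ofReal) hdR
    push_cast at h; linear_combination h
  have hM' : M = Matrix.of !![(((1-α)*(1-ε/2) : ℝ) : ℂ), 0, 0, (((1-ε)*a*b : ℝ) : ℂ);
      0, ((ε/2*(1-α) : ℝ) : ℂ), 0, 0;
      0, 0, ((ε/2*α : ℝ) : ℂ), 0;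
      (((1-ε)*a*b : ℝ) : ℂ), 0, 0, ((α*(1-ε/2) : ℝ) : ℂ)] := by
    subst hM hv
    ext i j
    rw [Matrix.add_apply, Matrix.smul_apply, Matrix.smul_apply, Matrix.vecMulVec_apply]
    fin_cases i <;> fin_cases j <;>
      simp [of_mat_apply4, Matrix.vecMulVec_apply, Matrix.diagonal, Matrix.vecHead, Matrix.vecTail] <;>
      push_cast <;>
      (first | ring1 | linear_combination (1-(ε:ℂ)) * haC | linear_combination (1-(ε:ℂ)) * hbC)
  constructor
  · show Matrix.conjTranspose M = M
    rw [hM]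
    have h1 : Matrix.conjTranspose (Matrix.vecMulVec v (star v)) = Matrix.vecMulVec v (star v) := by
      ext i j
      simp [Matrix.conjTranspose_apply, Matrix.vecMulVec_apply, mul_comm]
    have h2 : Matrix.conjTranspose (Matrix.diagonal ![((1 - α : ℝ) : ℂ), ((1 - α : ℝ) : ℂ),
          ((α : ℝ) : ℂ), ((α : ℝ) : ℂ)])
        = Matrix.diagonal ![((1 - α : ℝ) : ℂ), ((1 - α : ℝ) : ℂ), ((α : ℝ) : ℂ), ((α : ℝ) : ℂ)] := by
      have hw : star ![((1 - α : ℝ) : ℂ), ((1 - α : ℝ) : ℂ), ((α : ℝ) : ℂ), ((α : ℝ) : ℂ)]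
          = ![((1 - α : ℝ) : ℂ), ((1 - α : ℝ) : ℂ), ((α : ℝ) : ℂ), ((α : ℝ) : ℂ)] := by
        funext i
        fin_cases i <;>
          simp [Pi.star_apply, Complex.conj_ofReal, Matrix.vecHead, Matrix.vecTail]
      rw [Matrix.diagonal_conjTranspose, hw]
    simp only [Matrix.conjTranspose_add, Matrix.conjTranspose_smul, h1, h2, Complex.star_def,
      Complex.conj_ofReal]
  · apply Polynomial.funext
    intro z
    rw [hM', charpoly_eval4]
    simp only [Polynomial.eval_mul, Polynomial.eval_sub, Polynomial.eval_add,
      Polynomial.eval_X, Polynomial.eval_C]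
    push_cast
    linear_combination (-(z - (ε:ℂ)/2*(1-(α:ℂ))) * (z - (ε:ℂ)/2*(α:ℂ)) * (1-(ε:ℂ))^2 * (b:ℂ) * (b:ℂ)) * haC
      + (-(z - (ε:ℂ)/2*(1-(α:ℂ))) * (z - (ε:ℂ)/2*(α:ℂ)) * (1-(ε:ℂ))^2 * (1-(α:ℂ))) * hbC
      + ((z - (α:ℂ)*(ε:ℂ)/2) * (z - (1-(α:ℂ))*(ε:ℂ)/2)) * hdC
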